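/- Let n ≥ 1, let a_{i0} ≥ 0, a_{ii} > 0 for i = 1,…,n and a_{ij} ≥ 0 for i ≠ j, and suppose self-diffusion dominates cross-diffusion in the sense that η₀ := min_{i=1,…,n} ( a_{ii} − (1/4) Σ_{j=1}^n (√a_{ij} − √a_{ji})² ) > 0. Define the SKT diffusion matrix A(u) with entries A_{ij}(u) = δ_{ij}(a_{i0} + Σ_{k=1}^n a_{ik} u_k) + a_{ij} u_i and the Boltzmann entropy h(u) = Σ_{i=1}^n (u_i(log u_i − 1) + 1) (i.e. weights π_i = 1), whose Hessian is h''(u) = diag(1/u_i). Then for all u ∈ (0,∞)ⁿ and all z ∈ ℝⁿ one has zᵀ h''(u) A(u) z ≥ 2η₀ |z|². -/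

import Mathlib

private lemma skt_aux (α β x y p : ℝ) (hp : 0 < p) :
    0 ≤ α^2*p*x^2 + β^2*(1/p)*y^2 + (α^2+β^2)*(x*y) + (1/2)*(α-β)^2*(x^2+y^2) := by
  have h : α^2*p*x^2 + β^2*(1/p)*y^2 + (α^2+β^2)*(x*y) + (1/2)*(α-β)^2*(x^2+y^2)
      = (1/p)*(α*p*x+β*y)^2 + (1/2)*((α-β)*(x+y))^2 := by
    field_simp
    ring
  rw [h]
  positivity

private lemma skt_double_sum {n : ℕ} (F : Fin n → Fin n → ℝ) :
    ∑ i, ∑ j, (F i j + F j i) = 2 * ∑ i, ∑ j, F i j := by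
  simp only [Finset.sum_add_distrib]
  rw [two_mul]
  congr 1
  exact Finset.sum_comm

/-- Coercivity of the entropy-weighted SKT diffusion matrix when self-diffusion
dominates cross-diffusion: if
`η₀ = min_i (a_{ii} - (1/4) ∑_j (√a_{ij} - √a_{ji})²) > 0`, then with
`A_{ij}(u) = δ_{ij}(a_{i0} + ∑_k a_{ik} u_k) + a_{ij} u_i` and `h''(u) = diag(1/u_i)`
one has `zᵀ h''(u) A(u) z ≥ 2η₀ |z|²`. -/
theorem skt_coercivity_self_diffusion_dominance
    (n : ℕ) (hn : 1 ≤ n) (a0 : Fin n → ℝ) (a : Fin n → Fin n → ℝ)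
    (ha0 : ∀ i, 0 ≤ a0 i) (haii : ∀ i, 0 < a i i) (haij : ∀ i j, i ≠ j → 0 ≤ a i j)
    (hη : 0 < Finset.univ.inf' (Finset.univ_nonempty_iff.mpr ⟨⟨0, hn⟩⟩)
      (fun i => a i i - (1 / 4) * ∑ j, (Real.sqrt (a i j) - Real.sqrt (a j i)) ^ 2))
    (u z : Fin n → ℝ) (hu : ∀ i, 0 < u i) :
    2 * (Finset.univ.inf' (Finset.univ_nonempty_iff.mpr ⟨⟨0, hn⟩⟩)
        (fun i => a i i - (1 / 4) * ∑ j, (Real.sqrt (a i j) - Real.sqrt (a j i)) ^ 2)) *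
        ∑ i, z i ^ 2 ≤
      ∑ i, ∑ j, z i * ((1 / u i) *
        ((if i = j then a0 i + ∑ k, a i k * u k else 0) + a i j * u i)) * z j := by
  have hu' : ∀ i, u i ≠ 0 := fun i => (hu i).ne'
  set η := Finset.univ.inf' (Finset.univ_nonempty_iff.mpr ⟨⟨0, hn⟩⟩)
      (fun i => a i i - (1 / 4) * ∑ j, (Real.sqrt (a i j) - Real.sqrt (a j i)) ^ 2) with hηdef
  set s : Fin n → Fin n → ℝ := fun i j => (Real.sqrt (a i j) - Real.sqrt (a j i)) ^ 2 with hs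
  have hssymm : ∀ i j, s j i = s i j := by
    intro i j; simp only [hs]; ring
  set f : Fin n → Fin n → ℝ := fun i j =>
    (if i = j then 2 * a i i * z i ^ 2 else 0) - (1/4) * s i j * z i ^ 2
      - (1/4) * s i j * z j ^ 2 with hf
  set g : Fin n → Fin n → ℝ := fun i j =>
    a i j * (u j / u i) * z i ^ 2 + a i j * (z i * z j) with hg
  -- Step 1 : 2 η ∑ z² ≤ ∑∑ f
  have hstep1 : 2 * η * ∑ i, z i ^ 2 ≤ ∑ i, ∑ j, f i j := by
    have hsum : ∑ i, ∑ j, f i j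
        = ∑ i, (2 * (a i i - (1/4) * ∑ j, s i j)) * z i ^ 2 := by
      have hrow : ∀ i : Fin n, ∑ j, f i j
          = 2 * a i i * z i ^ 2 - (1/4) * (∑ j, s i j) * z i ^ 2
            - ∑ j, (1/4) * s i j * z j ^ 2 := by
        intro i
        simp only [hf, Finset.sum_sub_distrib, Finset.sum_ite_eq, Finset.mem_univ, if_true]
        rw [Finset.mul_sum, Finset.sum_mul]
      have hswap : ∑ i : Fin n, ∑ j : Fin n, (1/4) * s i j * z j ^ 2
          = ∑ i : Fin n, ((1/4) * ∑ j, s i j) * z i ^ 2 := by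
        rw [Finset.sum_comm]
        refine Finset.sum_congr rfl fun j _ => ?_
        rw [Finset.mul_sum, Finset.sum_mul]
        exact Finset.sum_congr rfl fun i _ => by rw [hssymm j i]
      calc ∑ i, ∑ j, f i j
          = ∑ i, (2 * a i i * z i ^ 2 - (1/4) * (∑ j, s i j) * z i ^ 2)
            - ∑ i, ∑ j, (1/4) * s i j * z j ^ 2 := by
            rw [← Finset.sum_sub_distrib]
            exact Finset.sum_congr rfl fun i _ => by rw [hrow i]
        _ = ∑ i, (2 * (a i i - (1/4) * ∑ j, s i j)) * z i ^ 2 := by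
            rw [hswap, ← Finset.sum_sub_distrib]
            exact Finset.sum_congr rfl fun i _ => by ring
    rw [hsum, Finset.mul_sum]
    refine Finset.sum_le_sum fun i _ => ?_
    have hle : η ≤ a i i - (1/4) * ∑ j, s i j := by
      have h := Finset.inf'_le
        (s := (Finset.univ : Finset (Fin n)))
        (fun i => a i i - (1 / 4) * ∑ j, (Real.sqrt (a i j) - Real.sqrt (a j i)) ^ 2)
        (Finset.mem_univ i)
      exact le_trans (le_of_eq hηdef) h
    have := sq_nonneg (z i)
    nlinarith
  -- Step 2 : ∑∑ f ≤ ∑∑ g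
  have hpair : ∀ i j, f i j + f j i ≤ g i j + g j i := by
    intro i j
    by_cases hij : i = j
    · subst hij
      have hi : u i / u i = 1 := div_self (hu' i)
      simp [hf, hg, hs, hi]
      try nlinarith [sq_nonneg (z i), (haii i).le]
    · have ha1 : 0 ≤ a i j := haij i j hij
      have ha2 : 0 ≤ a j i := haij j i (Ne.symm hij)
      have h1 : Real.sqrt (a i j) ^ 2 = a i j := Real.sq_sqrt ha1
      have h2 : Real.sqrt (a j i) ^ 2 = a j i := Real.sq_sqrt ha2
      have hp : 0 < u j / u i := div_pos (hu j) (hu i)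
      have hq : u i / u j = 1 / (u j / u i) := by
        rw [one_div_div]
      have key := skt_aux (Real.sqrt (a i j)) (Real.sqrt (a j i)) (z i) (z j)
        (u j / u i) hp
      rw [h1, h2] at key
      simp only [hf, hg, if_neg hij, if_neg (Ne.symm hij), hs, hssymm]
      rw [hq]
      nlinarith [key]
  have hstep2 : ∑ i, ∑ j, f i j ≤ ∑ i, ∑ j, g i j := by
    have hsum : ∑ i, ∑ j, (f i j + f j i) ≤ ∑ i, ∑ j, (g i j + g j i) :=
      Finset.sum_le_sum fun i _ => Finset.sum_le_sum fun j _ => hpair i j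
    rw [skt_double_sum f, skt_double_sum g] at hsum
    linarith
  -- Step 3 : ∑∑ g ≤ RHS
  have hstep3 : ∑ i, ∑ j, g i j ≤
      ∑ i, ∑ j, z i * ((1 / u i) *
        ((if i = j then a0 i + ∑ k, a i k * u k else 0) + a i j * u i)) * z j := by
    refine Finset.sum_le_sum fun i _ => ?_
    have hrow : ∑ j, z i * ((1 / u i) *
        ((if i = j then a0 i + ∑ k, a i k * u k else 0) + a i j * u i)) * z j
        = a0 i / u i * z i ^ 2 + ∑ j, g i j := by
      have hterm : ∀ j, z i * ((1 / u i) *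
          ((if i = j then a0 i + ∑ k, a i k * u k else 0) + a i j * u i)) * z j
          = (if i = j then (a0 i + ∑ k, a i k * u k) / u i * z i ^ 2 else 0)
            + a i j * (z i * z j) := by
        intro j
        by_cases hij : i = j
        · subst hij
          simp only [eq_self_iff_true, if_true, ↓reduceIte]
          field_simp [hu' i]
        · simp only [if_neg hij]
          field_simp [hu' i]
          ring
      rw [Finset.sum_congr rfl fun j _ => hterm j, Finset.sum_add_distrib]
      simp only [Finset.sum_ite_eq, Finset.mem_univ, if_true]
      have hsplit : (a0 i + ∑ k, a i k * u k) / u i * z i ^ 2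
          = a0 i / u i * z i ^ 2 + ∑ j, a i j * (u j / u i) * z i ^ 2 := by
        rw [add_div, add_mul, Finset.sum_div, Finset.sum_mul]
        congr 1
        exact Finset.sum_congr rfl fun j _ => by ring
      rw [hsplit]
      have : ∑ j, g i j = ∑ j, a i j * (u j / u i) * z i ^ 2 + ∑ j, a i j * (z i * z j) := by
        simp only [hg, Finset.sum_add_distrib]
      rw [this]
      ring
    rw [hrow]
    have h0 : 0 ≤ a0 i / u i * z i ^ 2 :=
      mul_nonneg (div_nonneg (ha0 i) (hu i).le) (sq_nonneg _)
    linarith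
  linarith
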